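/- Let p ∈ ℂ with |p| < 1 and let x, y, w, z be nonzero complex numbers. Then the theta functions satisfy the addition formula θ(xw;p) θ(x/w;p) θ(yz;p) θ(y/z;p) − θ(xz;p) θ(x/z;p) θ(yw;p) θ(y/w;p) = (y/w) · θ(xy;p) θ(x/y;p) θ(wz;p) θ(w/z;p). -/

import Mathlib

open Filter Finset Complex Topology

/-- The infinite q-Pochhammer symbol `(a;b)_∞ = ∏_{n=0}^∞ (1 - a bⁿ)`. -/
noncomputable def qPochInf (a b : ℂ) : ℂ := ∏' n : ℕ, (1 - a * b ^ n)

/-- The theta function `θ(z;p) = (z;p)_∞ (p z⁻¹;p)_∞`. -/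
noncomputable def theta (z p : ℂ) : ℂ := qPochInf z p * qPochInf (p * z⁻¹) p

namespace ThetaAdd






lemma summable_norm_geom {q : ℂ} (hq : ‖q‖ < 1) (a : ℂ) :
    Summable (fun n : ℕ => ‖a * q ^ n‖) := by
  simpa [norm_mul, norm_pow] using
    (summable_geometric_of_lt_one (norm_nonneg q) hq).mul_left ‖a‖

lemma hasProd_zero_of_exists {f : ℕ → ℂ} (h : ∃ n, f n = 0) : HasProd f 0 := by
  obtain ⟨n, hn⟩ := h
  have : ∀ᶠ s : Finset ℕ in atTop, ∏ i ∈ s, f i = 0 := by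
    filter_upwards [Filter.eventually_ge_atTop {n}] with s hs
    exact Finset.prod_eq_zero (hs (Finset.mem_singleton_self n)) hn
  exact Tendsto.congr' (this.mono fun s hs => hs.symm) tendsto_const_nhds

lemma summable_log {q : ℂ} (hq : ‖q‖ < 1) (a : ℂ) :
    Summable (fun n : ℕ => Complex.log (1 - a * q ^ n)) := by
  have hgeo := summable_norm_geom hq a
  have htend : Tendsto (fun n : ℕ => ‖a * q ^ n‖) atTop (𝓝 0) := hgeo.tendsto_atTop_zero
  have hev : ∀ᶠ n : ℕ in atTop, ‖Complex.log (1 - a * q ^ n)‖ ≤ 3 / 2 * ‖a * q ^ n‖ := by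
    filter_upwards [htend.eventually_le_const (by norm_num : (0:ℝ) < 1/2)] with n hn
    have : (1 : ℂ) - a * q ^ n = 1 + -(a * q ^ n) := by ring
    rw [this]
    calc ‖Complex.log (1 + -(a * q ^ n))‖ ≤ 3/2 * ‖-(a * q ^ n)‖ :=
          Complex.norm_log_one_add_half_le_self (by rw [norm_neg]; exact hn)
      _ = 3/2 * ‖a * q ^ n‖ := by rw [norm_neg]
  exact Summable.of_norm_bounded_eventually_nat (hgeo.mul_left (3/2)) hev

lemma multipliable_one_sub {q : ℂ} (hq : ‖q‖ < 1) (a : ℂ) :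
    Multipliable (fun n : ℕ => 1 - a * q ^ n) := by
  by_cases h : ∃ n : ℕ, 1 - a * q ^ n = 0
  · exact ⟨0, hasProd_zero_of_exists h⟩
  · push_neg at h
    exact Complex.multipliable_of_summable_log (summable_log hq a)

lemma tendsto_qPochInf {q : ℂ} (hq : ‖q‖ < 1) (a : ℂ) :
    Tendsto (fun N : ℕ => ∏ n ∈ range N, (1 - a * q ^ n)) atTop (𝓝 (qPochInf a q)) :=
  (multipliable_one_sub hq a).hasProd.tendsto_prod_nat

lemma qPochInf_ne_zero {q : ℂ} (hq : ‖q‖ < 1) (a : ℂ)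
    (h : ∀ n : ℕ, 1 - a * q ^ n ≠ 0) : qPochInf a q ≠ 0 := by
  have := Complex.cexp_tsum_eq_tprod (f := fun n : ℕ => 1 - a * q ^ n) h (summable_log hq a)
  rw [qPochInf, ← this]
  exact Complex.exp_ne_zero _


lemma qPochInf_zero (a : ℂ) : qPochInf a 0 = 1 - a := by
  rw [qPochInf, tprod_eq_prod (s := {0}) (f := fun n : ℕ => 1 - a * (0:ℂ) ^ n)]
  · simp
  · intro b hb
    simp only [Finset.mem_singleton] at hb
    simp [zero_pow hb]

lemma theta_zero (z : ℂ) : theta z 0 = 1 - z := by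
  simp [theta, qPochInf_zero]


def eZ (j : ℤ) : ℤ := j * (j - 1) / 2

lemma eZ_two (j : ℤ) : 2 * eZ j = j * (j - 1) := by
  have h : (2:ℤ) ∣ j * (j - 1) := (Int.even_mul_pred_self j).two_dvd
  unfold eZ; omega

lemma eZ_succ (j : ℤ) : eZ (j + 1) = eZ j + j := by
  have h1 := eZ_two (j + 1); have h2 := eZ_two j
  have h3 : (j + 1) * (j + 1 - 1) = j * (j - 1) + 2 * j := by ring
  omega

lemma eZ_nonneg (j : ℤ) : 0 ≤ eZ j := by
  have h := eZ_two j
  nlinarith [sq_nonneg (2 * j - 1)]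

lemma eZ_neg (n : ℤ) : eZ (-n) = eZ n + n := by
  have h1 := eZ_two (-n); have h2 := eZ_two n
  have h3 : (-n) * (-n - 1) = n * (n - 1) + 2 * n := by ring
  omega

/-- Summability over ℤ of `r^(eZ j) * s^j`. -/
lemma summable_int_eZ {r s : ℝ} (hr0 : 0 < r) (hr : r < 1) (hs : 0 < s) :
    Summable (fun j : ℤ => r ^ eZ j * s ^ j) := by
  have hrne : r ≠ 0 := ne_of_gt hr0
  have key : ∀ (t : ℝ), t ≠ 0 → Summable (fun n : ℕ => r ^ eZ n * t ^ (n:ℤ)) := by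
    intro t ht
    apply summable_of_ratio_norm_eventually_le (r := 1/2) (by norm_num)
    have htend : Tendsto (fun n : ℕ => |r ^ (n:ℤ) * t|) atTop (𝓝 0) := by
      have : Tendsto (fun n : ℕ => r ^ n * t) atTop (𝓝 (0 * t)) :=
        (tendsto_pow_atTop_nhds_zero_of_lt_one hr0.le hr).mul_const t
      rw [zero_mul] at this
      simpa [zpow_natCast] using this.abs.congr (fun n => rfl)
    filter_upwards [htend.eventually_le_const (by norm_num : (0:ℝ) < 1/2)] with n hn
    have hstep : r ^ eZ ((n:ℤ) + 1) * t ^ ((n:ℤ) + 1) =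
        (r ^ eZ (n:ℤ) * t ^ (n:ℤ)) * (r ^ (n:ℤ) * t) := by
      rw [eZ_succ, zpow_add₀ hrne, zpow_add₀ ht]
      rw [zpow_one]; ring
    calc ‖r ^ eZ ((n:ℤ) + 1) * t ^ ((n:ℤ) + 1)‖
        = ‖r ^ eZ (n:ℤ) * t ^ (n:ℤ)‖ * |r ^ (n:ℤ) * t| := by
          rw [hstep]; exact norm_mul _ _
      _ ≤ ‖r ^ eZ (n:ℤ) * t ^ (n:ℤ)‖ * (1/2) := by
          exact mul_le_mul_of_nonneg_left hn (norm_nonneg _)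
      _ = 1/2 * ‖r ^ eZ (n:ℤ) * t ^ (n:ℤ)‖ := by ring
  apply Summable.of_nat_of_neg
  · simpa using key s (ne_of_gt hs)
  · have h2 : ∀ n : ℕ, r ^ eZ (-(n:ℤ)) * s ^ (-(n:ℤ))
        = (r ^ eZ (n:ℤ) * (r / s) ^ (n:ℤ)) := by
      intro n
      rw [eZ_neg, zpow_add₀ hrne, div_zpow, zpow_neg]
      field_simp
    exact (key (r / s) (div_ne_zero hrne (ne_of_gt hs))).congr (fun n => (h2 n).symm)

lemma eZ_zero : eZ 0 = 0 := rfl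

variable {q : ℂ}

noncomputable def Dq (q : ℂ) (N : ℕ) : ℂ := ∏ i ∈ range N, (1 - q ^ (i + 1))
noncomputable def Nm (q : ℂ) (n k : ℕ) : ℂ := ∏ i ∈ range k, (1 - q ^ ((n : ℤ) - k + i + 1))
noncomputable def gb (q : ℂ) (n k : ℕ) : ℂ := Nm q n k / Dq q k

lemma one_sub_pow_ne_zero (hq : ‖q‖ < 1) (m : ℕ) : (1 : ℂ) - q ^ (m + 1) ≠ 0 := by
  intro h
  have h1 : q ^ (m + 1) = 1 := by linear_combination -h
  have h2 : ‖q ^ (m + 1)‖ < 1 := by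
    rw [norm_pow]
    calc ‖q‖ ^ (m + 1) ≤ ‖q‖ ^ 1 :=
          pow_le_pow_of_le_one (norm_nonneg q) hq.le (by omega)
      _ < 1 := by simpa using hq
  rw [h1] at h2; simp at h2

lemma Dq_ne_zero (hq : ‖q‖ < 1) (N : ℕ) : Dq q N ≠ 0 :=
  Finset.prod_ne_zero_iff.2 fun i _ => one_sub_pow_ne_zero hq i

lemma Dq_succ (N : ℕ) : Dq q (N + 1) = Dq q N * (1 - q ^ (N + 1)) := prod_range_succ _ _

lemma Nm_succ_succ (n k : ℕ) : Nm q (n + 1) (k + 1) = (1 - q ^ ((n : ℤ) + 1)) * Nm q n k := by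
  rw [Nm, prod_range_succ,
    show ((n + 1 : ℕ) : ℤ) - ((k + 1 : ℕ) : ℤ) + (k : ℤ) + 1 = (n : ℤ) + 1 by push_cast; ring,
    mul_comm]
  congr 1
  refine Finset.prod_congr rfl fun i _ => ?_
  congr 2
  push_cast; ring

lemma Nm_succ_k (n k : ℕ) : Nm q n (k + 1) = (1 - q ^ ((n : ℤ) - k)) * Nm q n k := by
  rw [Nm, prod_range_succ',
    show ((n : ℕ) : ℤ) - ((k + 1 : ℕ) : ℤ) + ((0 : ℕ) : ℤ) + 1 = (n : ℤ) - k by push_cast; ring,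
    mul_comm]
  congr 1
  · refine Finset.prod_congr rfl fun i _ => ?_
    congr 2
    push_cast; ring

lemma gb_zero (n : ℕ) : gb q n 0 = 1 := by simp [gb, Nm, Dq]

lemma gb_top (hq0 : q ≠ 0) (n : ℕ) : gb q n (n + 1) = 0 := by
  rw [gb, Nm]
  apply div_eq_zero_iff.2
  left
  apply Finset.prod_eq_zero (Finset.mem_range.2 (Nat.succ_pos n))
  simp

lemma gb_pascal (hq0 : q ≠ 0) (hq : ‖q‖ < 1) (n k : ℕ) :
    gb q (n + 1) (k + 1) = gb q n (k + 1) + q ^ ((n : ℤ) - k) * gb q n k := by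
  have hD := Dq_ne_zero hq k
  have hD' := one_sub_pow_ne_zero hq k
  have hz : q ^ ((n : ℤ) - k) * q ^ ((k : ℕ) + 1) = q ^ ((n : ℤ) + 1) := by
    rw [← zpow_natCast q (k + 1), ← zpow_add₀ hq0]
    congr 1
    push_cast; ring
  have key : (1 - q ^ ((n : ℤ) + 1)) * Nm q n k
      = (1 - q ^ ((n : ℤ) - k)) * Nm q n k
        + (q ^ ((n : ℤ) - k) * (1 - q ^ ((k : ℕ) + 1))) * Nm q n k := by
    linear_combination (Nm q n k) * hz
  rw [gb, gb, gb, Nm_succ_succ, Nm_succ_k, Dq_succ, key, add_div]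
  congr 1
  field_simp

/-- The finite q-binomial theorem. -/
lemma qbinom (hq0 : q ≠ 0) (hq : ‖q‖ < 1) (u : ℂ) (n : ℕ) :
    ∏ k ∈ range n, (1 + u * q ^ k) = ∑ k ∈ range (n + 1), gb q n k * q ^ eZ k * u ^ k := by
  induction n with
  | zero => simp [gb_zero, eZ_zero]
  | succ n ih =>
    have he' : ∀ k : ℕ, eZ ((k + 1 : ℕ) : ℤ) = eZ k + k := by
      intro k; push_cast; exact eZ_succ k
    have hps : ∀ k ∈ range (n + 1),
        gb q (n + 1) (k + 1) * q ^ eZ ((k + 1 : ℕ) : ℤ) * u ^ (k + 1)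
          = gb q n (k + 1) * q ^ eZ ((k + 1 : ℕ) : ℤ) * u ^ (k + 1)
            + (q ^ (n : ℕ) * u) * (gb q n k * q ^ eZ (k : ℕ) * u ^ k) := by
      intro k _
      rw [gb_pascal hq0 hq n k]
      have hq2 : q ^ ((n : ℤ) - k) * q ^ eZ ((k + 1 : ℕ) : ℤ)
          = q ^ ((n : ℕ)) * q ^ eZ ((k : ℕ) : ℤ) := by
        rw [← zpow_natCast q n, ← zpow_add₀ hq0, ← zpow_add₀ hq0, he']
        congr 1; ring
      calc (gb q n (k + 1) + q ^ ((n : ℤ) - k) * gb q n k) * q ^ eZ ((k + 1 : ℕ) : ℤ) * u ^ (k + 1)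
          = gb q n (k + 1) * q ^ eZ ((k + 1 : ℕ) : ℤ) * u ^ (k + 1)
            + (q ^ ((n : ℤ) - k) * q ^ eZ ((k + 1 : ℕ) : ℤ)) * gb q n k * u ^ (k + 1) := by ring
        _ = _ := by rw [hq2]; ring
    have h1 : (∑ k ∈ range (n + 1), gb q n (k + 1) * q ^ eZ ((k + 1 : ℕ) : ℤ) * u ^ (k + 1))
        + gb q n 0 * q ^ eZ ((0 : ℕ) : ℤ) * u ^ 0
        = ∑ k ∈ range (n + 1), gb q n k * q ^ eZ (k : ℕ) * u ^ k := by
      rw [← sum_range_succ' (fun k => gb q n k * q ^ eZ (k : ℕ) * u ^ k) (n + 1),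
        sum_range_succ]
      simp [gb_top hq0]
    have expand : ∑ k ∈ range (n + 1 + 1), gb q (n + 1) k * q ^ eZ (k : ℕ) * u ^ k
        = (∑ k ∈ range (n + 1), gb q n (k + 1) * q ^ eZ ((k + 1 : ℕ) : ℤ) * u ^ (k + 1)
            + gb q n 0 * q ^ eZ ((0 : ℕ) : ℤ) * u ^ 0)
          + (q ^ (n : ℕ) * u) * ∑ k ∈ range (n + 1), gb q n k * q ^ eZ (k : ℕ) * u ^ k := by
      rw [sum_range_succ' (fun k => gb q (n + 1) k * q ^ eZ (k : ℕ) * u ^ k) (n + 1),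
        Finset.sum_congr rfl hps, Finset.sum_add_distrib, ← Finset.mul_sum]
      have h0 : gb q (n + 1) 0 = gb q n 0 := by rw [gb_zero, gb_zero]
      rw [h0]; ring
    rw [prod_range_succ, ih, expand, h1]
    ring
variable {q : ℂ}

lemma prod_zpow (hq0 : q ≠ 0) (f : ℕ → ℤ) (n : ℕ) :
    ∏ i ∈ range n, q ^ f i = q ^ (∑ i ∈ range n, f i) := by
  induction n with
  | zero => simp
  | succ n ih => rw [prod_range_succ, sum_range_succ, ih, zpow_add₀ hq0]

/-- The finite Jacobi triple product. -/
lemma finJTP (hq0 : q ≠ 0) (hq : ‖q‖ < 1) {z : ℂ} (hz : z ≠ 0) (n : ℕ) :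
    ∏ j ∈ range n, ((1 - z * q ^ j) * (1 - q ^ (j + 1) * z⁻¹))
      = ∑ k ∈ range (2 * n + 1),
          (-1 : ℂ) ^ (n + k) * gb q (2 * n) k * q ^ eZ ((k : ℤ) - n) * z ^ ((k : ℤ) - n) := by
  set c : ℤ := ∑ k ∈ range n, ((k : ℤ) - n) with hcdef
  have hc : 2 * c = (n : ℤ) * ((n : ℤ) - 1) - 2 * ((n : ℤ) * (n : ℤ)) := by
    have h2 : c = (∑ k ∈ range n, (k : ℤ)) - n * n := by
      rw [hcdef, Finset.sum_sub_distrib]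
      simp [Finset.sum_const, mul_comm]
    have h3 : ∀ m : ℕ, (∑ k ∈ range m, (k : ℤ)) * 2 = (m : ℤ) * ((m : ℤ) - 1) := by
      intro m
      induction m with
      | zero => simp
      | succ m ih =>
        rw [sum_range_succ]
        push_cast
        ring_nf
        ring_nf at ih
        linarith
    have h4 := h3 n
    linarith
  have hb := qbinom hq0 hq (-z * q ^ (-(n : ℤ))) (2 * n)
  -- transform left side of hb
  have h2 : ∀ k : ℕ, 1 + (-z * q ^ (-(n : ℤ))) * q ^ (n + k) = 1 - z * q ^ k := by
    intro k
    have e1 : q ^ (-(n : ℤ)) * q ^ ((n + k : ℕ)) = q ^ (k : ℕ) := by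
      rw [← zpow_natCast q (n + k), ← zpow_natCast q k, ← zpow_add₀ hq0]
      congr 1; push_cast; ring
    calc 1 + (-z * q ^ (-(n : ℤ))) * q ^ (n + k)
        = 1 - z * (q ^ (-(n : ℤ)) * q ^ ((n + k : ℕ))) := by ring
      _ = 1 - z * q ^ k := by rw [e1]
  have h3 : ∀ k : ℕ, 1 + (-z * q ^ (-(n : ℤ))) * q ^ k
      = (-z * q ^ ((k : ℤ) - n)) * (1 - q ^ ((n : ℤ) - k) * z⁻¹) := by
    intro k
    have e1 : q ^ ((k : ℤ) - n) * q ^ ((n : ℤ) - k) = 1 := by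
      rw [← zpow_add₀ hq0, show (k : ℤ) - n + ((n : ℤ) - k) = 0 by ring, zpow_zero]
    have e2 : q ^ (-(n : ℤ)) * q ^ (k : ℕ) = q ^ ((k : ℤ) - n) := by
      rw [← zpow_natCast q k, ← zpow_add₀ hq0]
      congr 1; ring
    have hzz : z * z⁻¹ = 1 := mul_inv_cancel₀ hz
    calc 1 + (-z * q ^ (-(n : ℤ))) * q ^ k
        = 1 - z * (q ^ (-(n : ℤ)) * q ^ (k : ℕ)) := by ring
      _ = 1 - z * q ^ ((k : ℤ) - n) := by rw [e2]
      _ = (z * z⁻¹) * (q ^ ((k : ℤ) - n) * q ^ ((n : ℤ) - k)) - z * q ^ ((k : ℤ) - n) := by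
          rw [hzz, e1]; ring
      _ = (-z * q ^ ((k : ℤ) - n)) * (1 - q ^ ((n : ℤ) - k) * z⁻¹) := by ring
  have hrefl : ∏ k ∈ range n, (1 - q ^ ((n : ℤ) - k) * z⁻¹)
      = ∏ j ∈ range n, (1 - q ^ (j + 1) * z⁻¹) := by
    rw [← prod_range_reflect (fun j => 1 - q ^ (j + 1) * z⁻¹) n]
    refine Finset.prod_congr rfl fun k hk => ?_
    rw [Finset.mem_range] at hk
    rw [← zpow_natCast q (n - 1 - k + 1),
      show ((n : ℤ) - k) = ((n - 1 - k + 1 : ℕ) : ℤ) from by omega]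
  have hsplit : ∏ k ∈ range (2 * n), (1 + (-z * q ^ (-(n : ℤ))) * q ^ k)
      = ((-z) ^ n * q ^ c) *
        ∏ j ∈ range n, ((1 - z * q ^ j) * (1 - q ^ (j + 1) * z⁻¹)) := by
    rw [two_mul, prod_range_add]
    rw [Finset.prod_congr rfl (fun k _ => h3 k), Finset.prod_congr rfl (fun k _ => h2 k)]
    rw [Finset.prod_mul_distrib, Finset.prod_mul_distrib, Finset.prod_const,
      prod_zpow hq0, ← hcdef, hrefl, Finset.prod_mul_distrib, Finset.card_range, neg_pow]
    ring
  have hPne : (-z) ^ n * q ^ c ≠ 0 :=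
    mul_ne_zero (pow_ne_zero n (neg_ne_zero.2 hz)) (zpow_ne_zero c hq0)
  apply mul_right_cancel₀ hPne
  have hθ : (∏ j ∈ range n, ((1 - z * q ^ j) * (1 - q ^ (j + 1) * z⁻¹))) * ((-z) ^ n * q ^ c)
      = ∑ k ∈ range (2 * n + 1), gb q (2 * n) k * q ^ eZ (k : ℤ) * (-z * q ^ (-(n : ℤ))) ^ k := by
    rw [mul_comm, ← hsplit]; exact hb
  rw [hθ, Finset.sum_mul]
  refine (Finset.sum_congr rfl fun k _ => ?_).symm
  -- key term identity
  have hu : (-z * q ^ (-(n : ℤ))) ^ k = (-1 : ℂ) ^ k * z ^ k * q ^ (-((n : ℤ) * k)) := by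
    rw [mul_pow, neg_pow, ← zpow_natCast (q ^ (-(n : ℤ))) k, ← zpow_mul]
    ring_nf
  have hsgn : (-1 : ℂ) ^ (n + k) * (-1) ^ n = (-1) ^ k := by
    rw [← pow_add, show n + k + n = 2 * n + k by ring, pow_add, pow_mul]
    norm_num
  have hzz : z ^ ((k : ℤ) - n) * z ^ (n : ℕ) = z ^ (k : ℕ) := by
    rw [← zpow_natCast z n, ← zpow_natCast z k, ← zpow_add₀ hz]
    congr 1; ring
  have hqe : eZ ((k : ℤ) - n) + c = eZ (k : ℤ) + (-((n : ℤ) * k)) := by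
    have e1 := eZ_two ((k : ℤ) - n)
    have e2 := eZ_two (k : ℤ)
    have e3 : ((k : ℤ) - n) * ((k : ℤ) - n - 1)
        = (k : ℤ) * ((k : ℤ) - 1) - 2 * ((n : ℤ) * (k : ℤ)) + (n : ℤ) * (n : ℤ) + n := by ring
    have e5 : (n : ℤ) * ((n : ℤ) - 1) = (n : ℤ) * (n : ℤ) - n := by ring
    omega
  have hqq : q ^ eZ ((k : ℤ) - n) * q ^ c = q ^ eZ (k : ℤ) * q ^ (-((n : ℤ) * k)) := by
    rw [← zpow_add₀ hq0, ← zpow_add₀ hq0, hqe]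
  calc (-1 : ℂ) ^ (n + k) * gb q (2 * n) k * q ^ eZ ((k : ℤ) - n) * z ^ ((k : ℤ) - n)
        * ((-z) ^ n * q ^ c)
      = ((-1 : ℂ) ^ (n + k) * (-1) ^ n) * gb q (2 * n) k
        * (q ^ eZ ((k : ℤ) - n) * q ^ c) * (z ^ ((k : ℤ) - n) * z ^ (n : ℕ)) := by
        rw [neg_pow]; ring
    _ = (-1 : ℂ) ^ k * gb q (2 * n) k * (q ^ eZ (k : ℤ) * q ^ (-((n : ℤ) * k))) * z ^ (k : ℕ) := by
        rw [hsgn, hqq, hzz]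
    _ = gb q (2 * n) k * q ^ eZ (k : ℤ) * (-z * q ^ (-(n : ℤ))) ^ k := by
        rw [hu]; ring


/-! ## The infinite Jacobi triple product -/

noncomputable def Sterm (q z : ℂ) (j : ℤ) : ℂ := (-1 : ℂ) ^ j * q ^ eZ j * z ^ j
noncomputable def SZ (q z : ℂ) : ℂ := ∑' j : ℤ, Sterm q z j

lemma norm_Sterm (q z : ℂ) (j : ℤ) :
    ‖Sterm q z j‖ = ‖q‖ ^ eZ j * ‖z‖ ^ j := by
  rw [Sterm, norm_mul, norm_mul]
  simp only [norm_zpow]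
  simp

lemma tendsto_Dq (hq : ‖q‖ < 1) :
    Tendsto (Dq q) atTop (𝓝 (qPochInf q q)) := by
  apply (tendsto_qPochInf hq q).congr
  intro N
  exact Finset.prod_congr rfl fun i _ => by rw [pow_succ']

lemma P_ne_zero (hq : ‖q‖ < 1) : qPochInf q q ≠ 0 :=
  qPochInf_ne_zero hq q (fun n => by rw [← pow_succ']; exact one_sub_pow_ne_zero hq n)

lemma exists_Dq_bounds (hq : ‖q‖ < 1) :
    ∃ U δ : ℝ, 0 < δ ∧ (∀ N, ‖Dq q N‖ ≤ U) ∧ (∀ N, δ ≤ ‖Dq q N‖) := by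
  have hn : Tendsto (fun N => ‖Dq q N‖) atTop (𝓝 ‖qPochInf q q‖) := (tendsto_Dq hq).norm
  obtain ⟨U, hU⟩ := hn.bddAbove_range
  simp only [mem_upperBounds, Set.mem_range, forall_exists_index] at hU
  have hpos : 0 < ‖qPochInf q q‖ := norm_pos_iff.2 (P_ne_zero hq)
  have hev : ∀ᶠ N in atTop, ‖qPochInf q q‖ / 2 ≤ ‖Dq q N‖ :=
    hn.eventually_const_le (by linarith)
  obtain ⟨N₀, hN₀⟩ := eventually_atTop.1 hev
  have hDpos : ∀ N, 0 < ‖Dq q N‖ := fun N => norm_pos_iff.2 (Dq_ne_zero hq N)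
  rcases Nat.eq_zero_or_pos N₀ with h0 | h0
  · exact ⟨U, ‖qPochInf q q‖ / 2, by linarith, fun N => hU _ N rfl,
      fun N => hN₀ N (h0 ▸ N.zero_le)⟩
  · set F := (Finset.range N₀).image (fun N => ‖Dq q N‖) with hF
    have hFne : F.Nonempty := ⟨‖Dq q 0‖, Finset.mem_image_of_mem _ (Finset.mem_range.2 h0)⟩
    refine ⟨U, min (‖qPochInf q q‖ / 2) (F.min' hFne), ?_, fun N => hU _ N rfl, ?_⟩
    · apply lt_min (by linarith)
      obtain ⟨N, _, hNe⟩ := Finset.mem_image.1 (F.min'_mem hFne)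
      rw [← hNe]
      exact hDpos N
    · intro N
      rcases lt_or_ge N N₀ with h | h
      · exact le_trans (min_le_right _ _)
          (F.min'_le _ (Finset.mem_image_of_mem _ (Finset.mem_range.2 h)))
      · exact le_trans (min_le_left _ _) (hN₀ N h)

lemma Dq_mul_Nm (hq : ‖q‖ < 1) {m k : ℕ} (hk : k ≤ m) :
    Dq q (m - k) * Nm q m k = Dq q m := by
  have hm : m = (m - k) + k := by omega
  conv_rhs => rw [Dq, hm, prod_range_add]
  congr 1
  rw [Nm]
  refine Finset.prod_congr rfl fun i _ => ?_
  rw [← zpow_natCast q (m - k + i + 1),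
    show (m : ℤ) - k + i + 1 = ((m - k + i + 1 : ℕ) : ℤ) from by omega]

lemma gb_eq_Dq (hq : ‖q‖ < 1) {m k : ℕ} (hk : k ≤ m) :
    gb q m k = Dq q m / (Dq q (m - k) * Dq q k) := by
  rw [gb, ← Dq_mul_Nm hq hk, mul_div_mul_left _ _ (Dq_ne_zero hq (m - k))]

lemma tendsto_nat_comp (g : ℕ → ℕ) (hg : ∀ b : ℕ, ∀ᶠ n in atTop, b ≤ g n)
    (hq : ‖q‖ < 1) :
    Tendsto (fun n => Dq q (g n)) atTop (𝓝 (qPochInf q q)) :=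
  (tendsto_Dq hq).comp (Filter.tendsto_atTop.2 hg)

/-- The Jacobi triple product. -/
lemma JTP (hq0 : q ≠ 0) (hq : ‖q‖ < 1) {z : ℂ} (hz : z ≠ 0) :
    theta z q * qPochInf q q = SZ q z := by
  have hP := P_ne_zero hq
  obtain ⟨U, δ, hδpos, hU, hδ⟩ := exists_Dq_bounds hq
  have hq0' : 0 < ‖q‖ := norm_pos_iff.mpr hq0
  have hz0' : 0 < ‖z‖ := norm_pos_iff.mpr hz
  set F : ℕ → ℤ → ℂ := fun n j => if j.natAbs ≤ n then
    (-1 : ℂ) ^ j * gb q (2 * n) ((j + n).toNat) * q ^ eZ j * z ^ j else 0 with hFdef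
  -- each finite product is a tsum
  have hFsum : ∀ n : ℕ, (∏ j ∈ range n, ((1 - z * q ^ j) * (1 - q ^ (j + 1) * z⁻¹)))
      = ∑' j : ℤ, F n j := by
    intro n
    rw [finJTP hq0 hq hz n]
    have hvan : ∀ j ∉ (range (2 * n + 1)).image (fun k : ℕ => (k : ℤ) - n), F n j = 0 := by
      intro j hj
      simp only [hFdef]
      rw [if_neg]
      intro habs
      apply hj
      rw [Finset.mem_image]
      exact ⟨(j + n).toNat, Finset.mem_range.2 (by omega), by omega⟩
    rw [tsum_eq_sum hvan, Finset.sum_image (by intro a _ b _ h; have h' : (a:ℤ) - n = (b:ℤ) - n := h; omega)]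
    refine (Finset.sum_congr rfl fun k hk => ?_).symm
    rw [Finset.mem_range] at hk
    have h1 : ((k : ℤ) - n).natAbs ≤ n := by omega
    simp only [hFdef]
    rw [if_pos h1, show ((k : ℤ) - n + n).toNat = k by omega]
    have hsgn : (-1 : ℂ) ^ ((k : ℤ) - n) = (-1 : ℂ) ^ (n + k : ℕ) := by
      rw [← zpow_natCast (-1 : ℂ) (n + k),
        show ((n + k : ℕ) : ℤ) = ((k : ℤ) - n) + 2 * n by push_cast; ring,
        zpow_add₀ (by norm_num : (-1 : ℂ) ≠ 0), zpow_mul]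
      norm_num
    rw [hsgn]
  -- pointwise limits
  have hpt : ∀ j : ℤ, Tendsto (fun n => F n j) atTop
      (𝓝 ((qPochInf q q)⁻¹ * Sterm q z j)) := by
    intro j
    have hev : ∀ᶠ n : ℕ in atTop, F n j
        = ((-1 : ℂ) ^ j * q ^ eZ j * z ^ j) *
          (Dq q (2 * n) / (Dq q (((n : ℤ) - j).toNat) * Dq q ((j + n).toNat))) := by
      filter_upwards [eventually_ge_atTop j.natAbs] with n hn
      simp only [hFdef]
      rw [if_pos hn, gb_eq_Dq hq (by omega : (j + (n:ℤ)).toNat ≤ 2 * n),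
        show 2 * n - (j + (n:ℤ)).toNat = ((n : ℤ) - j).toNat by omega]
      ring
    have hlim : Tendsto (fun n : ℕ =>
        ((-1 : ℂ) ^ j * q ^ eZ j * z ^ j) *
          (Dq q (2 * n) / (Dq q (((n : ℤ) - j).toNat) * Dq q ((j + n).toNat)))) atTop
        (𝓝 (((-1 : ℂ) ^ j * q ^ eZ j * z ^ j) *
          (qPochInf q q / (qPochInf q q * qPochInf q q)))) := by
      apply Tendsto.const_mul
      apply Tendsto.div
      · exact tendsto_nat_comp _ (fun b => (eventually_ge_atTop b).mono fun n hn => by omega) hq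
      · exact Tendsto.mul
          (tendsto_nat_comp _ (fun b => (eventually_ge_atTop (b + j.natAbs)).mono
            fun n hn => by omega) hq)
          (tendsto_nat_comp _ (fun b => (eventually_ge_atTop (b + j.natAbs)).mono
            fun n hn => by omega) hq)
      · exact mul_ne_zero hP hP
    have heq : ((-1 : ℂ) ^ j * q ^ eZ j * z ^ j) *
        (qPochInf q q / (qPochInf q q * qPochInf q q))
        = (qPochInf q q)⁻¹ * Sterm q z j := by
      rw [Sterm]
      field_simp
    rw [← heq]
    exact Tendsto.congr' (hev.mono fun n h => h.symm) hlim
  -- dominating function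
  set C : ℝ := U / (δ * δ) with hC
  have hUpos : 0 < U := lt_of_lt_of_le hδpos ((hδ 0).trans (hU 0))
  have hCpos : 0 < C := div_pos hUpos (mul_pos hδpos hδpos)
  have hbound : ∀ n : ℕ, ∀ j : ℤ,
      ‖F n j‖ ≤ C * (‖q‖ ^ eZ j * ‖z‖ ^ j) := by
    intro n j
    simp only [hFdef]
    split
    · next hn =>
      rw [norm_mul, norm_mul, norm_mul]
      simp only [norm_zpow]
      have h1 : ‖(-1 : ℂ)‖ ^ j = 1 := by norm_num
      rw [h1, one_mul]
      have hgb : ‖gb q (2 * n) ((j + n).toNat)‖ ≤ C := by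
        rw [show ‖gb q (2 * n) ((j + n).toNat)‖ = ‖gb q (2 * n) ((j + n).toNat)‖
          from rfl]
        rw [gb_eq_Dq hq (by omega : ((j : ℤ) + n).toNat ≤ 2 * n), norm_div, norm_mul]
        exact div_le_div₀ hUpos.le (hU _) (mul_pos hδpos hδpos)
          (mul_le_mul (hδ _) (hδ _) hδpos.le (norm_nonneg _))
      calc ‖gb q (2 * n) ((j + n).toNat)‖ * ‖q‖ ^ eZ j
            * ‖z‖ ^ j
          ≤ C * ‖q‖ ^ eZ j * ‖z‖ ^ j := by
            apply mul_le_mul_of_nonneg_right _ (zpow_pos hz0' _).le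
            exact mul_le_mul_of_nonneg_right hgb (zpow_pos hq0' _).le
        _ = C * (‖q‖ ^ eZ j * ‖z‖ ^ j) := by ring
    · next =>
      rw [norm_zero]
      positivity
  have hgsum : Summable (fun j : ℤ => C * (‖q‖ ^ eZ j * ‖z‖ ^ j)) :=
    (summable_int_eZ hq0' hq hz0').mul_left C
  have hlim2 : Tendsto (fun n => ∑' j : ℤ, F n j) atTop
      (𝓝 (∑' j : ℤ, (qPochInf q q)⁻¹ * Sterm q z j)) :=
    tendsto_tsum_of_dominated_convergence hgsum hpt (Eventually.of_forall hbound)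
  have hθ : Tendsto (fun n => ∏ j ∈ range n, ((1 - z * q ^ j) * (1 - q ^ (j + 1) * z⁻¹)))
      atTop (𝓝 (theta z q)) := by
    rw [theta]
    refine ((tendsto_qPochInf hq z).mul (tendsto_qPochInf hq (q * z⁻¹))).congr fun n => ?_
    rw [← prod_mul_distrib]
    exact Finset.prod_congr rfl fun i _ => by ring
  have hfinal : theta z q = ∑' j : ℤ, (qPochInf q q)⁻¹ * Sterm q z j :=
    tendsto_nhds_unique (hθ.congr hFsum) hlim2
  rw [tsum_mul_left] at hfinal
  rw [hfinal, SZ]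
  field_simp



/-! ## The Riemann relation for the theta series -/

lemma neg_one_zpow_congr {s t : ℤ} (h : 2 ∣ s - t) : (-1 : ℂ) ^ s = (-1 : ℂ) ^ t := by
  obtain ⟨k, hk⟩ := h
  have hs : s = t + 2 * k := by omega
  rw [hs, zpow_add₀ (by norm_num : (-1 : ℂ) ≠ 0), zpow_mul]
  norm_num

lemma eZ_sum_eq {a b c d a' b' c' d' : ℤ}
    (h : a * (a - 1) + b * (b - 1) + c * (c - 1) + d * (d - 1)
      = a' * (a' - 1) + b' * (b' - 1) + c' * (c' - 1) + d' * (d' - 1)) :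
    eZ a + eZ b + eZ c + eZ d = eZ a' + eZ b' + eZ c' + eZ d' := by
  have e1 := eZ_two a; have e2 := eZ_two b; have e3 := eZ_two c; have e4 := eZ_two d
  have e5 := eZ_two a'; have e6 := eZ_two b'; have e7 := eZ_two c'; have e8 := eZ_two d'
  omega

lemma Sterm_quad4 {q : ℂ} (hq0 : q ≠ 0) {u v u2 v2 : ℂ} (hu : u ≠ 0) (hv : v ≠ 0)
    (hu2 : u2 ≠ 0) (hv2 : v2 ≠ 0) (a b c d : ℤ) :
    Sterm q (u * v) a * Sterm q (u / v) b * (Sterm q (u2 * v2) c * Sterm q (u2 / v2) d)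
      = (-1 : ℂ) ^ (a + b + c + d) * q ^ (eZ a + eZ b + eZ c + eZ d)
        * (u ^ (a + b) * v ^ (a - b)) * (u2 ^ (c + d) * v2 ^ (c - d)) := by
  have hne : (-1 : ℂ) ≠ 0 := by norm_num
  simp only [Sterm, mul_zpow, div_zpow]
  rw [zpow_add₀ hne, zpow_add₀ hne, zpow_add₀ hne,
    zpow_add₀ hq0, zpow_add₀ hq0, zpow_add₀ hq0,
    zpow_add₀ hu, zpow_sub₀ hv, zpow_add₀ hu2, zpow_sub₀ hv2]
  field_simp

section cases
variable {q x y w z : ℂ}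

lemma caseAB (hq0 : q ≠ 0) (hx : x ≠ 0) (hy : y ≠ 0) (hw : w ≠ 0) (hz : z ≠ 0) (a b c h : ℤ) :
    Sterm q (x * w) a * Sterm q (x / w) b * (Sterm q (y * z) c * Sterm q (y / z) (a + b + c - 2 * h))
      = Sterm q (x * z) h * Sterm q (x / z) (a + b - h)
        * (Sterm q (y * w) (a + c - h) * Sterm q (y / w) (b + c - h)) := by
  rw [Sterm_quad4 hq0 hx hw hy hz, Sterm_quad4 hq0 hx hz hy hw]
  rw [show h + (a + b - h) + (a + c - h) + (b + c - h) = a + b + c + (a + b + c - 2 * h) from by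
    ring]
  rw [show eZ h + eZ (a + b - h) + eZ (a + c - h) + eZ (b + c - h)
      = eZ a + eZ b + eZ c + eZ (a + b + c - 2 * h) from (eZ_sum_eq (by ring)).symm]
  rw [show h + (a + b - h) = a + b from by ring]
  rw [show h - (a + b - h) = c - (a + b + c - 2 * h) from by ring]
  rw [show a + c - h + (b + c - h) = c + (a + b + c - 2 * h) from by ring]
  rw [show a + c - h - (b + c - h) = a - b from by ring]
  ring

lemma caseAC (hq0 : q ≠ 0) (hx : x ≠ 0) (hy : y ≠ 0) (hw : w ≠ 0) (hz : z ≠ 0) (a b c g : ℤ) :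
    Sterm q (x * w) a * Sterm q (x / w) b
        * (Sterm q (y * z) c * Sterm q (y / z) (2 * g + 1 - a - b - c))
      = y / w * (Sterm q (x * y) g * Sterm q (x / y) (a + b - g)
        * (Sterm q (w * z) (a + c - g) * Sterm q (w / z) (g + 1 - b - c))) := by
  rw [div_mul_eq_mul_div, eq_div_iff hw]
  rw [Sterm_quad4 hq0 hx hw hy hz, Sterm_quad4 hq0 hx hy hw hz]
  rw [neg_one_zpow_congr (show (2:ℤ) ∣ (a + b + c + (2 * g + 1 - a - b - c))
      - (g + (a + b - g) + (a + c - g) + (g + 1 - b - c)) from by omega)]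
  rw [show eZ a + eZ b + eZ c + eZ (2 * g + 1 - a - b - c)
      = eZ g + eZ (a + b - g) + eZ (a + c - g) + eZ (g + 1 - b - c) from eZ_sum_eq (by ring)]
  rw [show g + (a + b - g) = a + b from by ring]
  rw [show c + (2 * g + 1 - a - b - c) = (g - (a + b - g)) + 1 from by ring, zpow_add_one₀ hy]
  rw [show a + c - g + (g + 1 - b - c) = (a - b) + 1 from by ring, zpow_add_one₀ hw]
  rw [show a + c - g - (g + 1 - b - c) = c - (2 * g + 1 - a - b - c) from by ring]
  ring

lemma caseBC (hq0 : q ≠ 0) (hx : x ≠ 0) (hy : y ≠ 0) (hw : w ≠ 0) (hz : z ≠ 0) (a b c g : ℤ) :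
    Sterm q (x * z) a * Sterm q (x / z) b
        * (Sterm q (y * w) c * Sterm q (y / w) (2 * g + 1 - a - b - c))
      = -(y / w * (Sterm q (x * y) g * Sterm q (x / y) (a + b - g)
        * (Sterm q (w * z) (a + c - g) * Sterm q (w / z) (b + c - g)))) := by
  rw [div_mul_eq_mul_div, ← neg_div, eq_div_iff hw]
  rw [Sterm_quad4 hq0 hx hz hy hw, Sterm_quad4 hq0 hx hy hw hz]
  rw [neg_one_zpow_congr (show (2:ℤ) ∣ (a + b + c + (2 * g + 1 - a - b - c)) - 1 from by omega),
    zpow_one]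
  rw [neg_one_zpow_congr (show (2:ℤ) ∣ (g + (a + b - g) + (a + c - g) + (b + c - g)) - 0 from by
    omega), zpow_zero]
  rw [show eZ a + eZ b + eZ c + eZ (2 * g + 1 - a - b - c)
      = eZ g + eZ (a + b - g) + eZ (a + c - g) + eZ (b + c - g) from eZ_sum_eq (by ring)]
  rw [show g + (a + b - g) = a + b from by ring]
  rw [show c + (2 * g + 1 - a - b - c) = (g - (a + b - g)) + 1 from by ring, zpow_add_one₀ hy]
  rw [show a + c - g + (b + c - g) = (c - (2 * g + 1 - a - b - c)) + 1 from by ring,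
    zpow_add_one₀ hw]
  rw [show a + c - g - (b + c - g) = a - b from by ring]
  ring

end cases

section riemann
variable {q x y w z : ℂ}

/-- Index type for quadruple sums. -/
local notation "I4" => (ℤ × ℤ) × (ℤ × ℤ)

noncomputable def TA (q x y w z : ℂ) : (ℤ × ℤ) × (ℤ × ℤ) → ℂ := fun v =>
  Sterm q (x * w) v.1.1 * Sterm q (x / w) v.1.2 * (Sterm q (y * z) v.2.1 * Sterm q (y / z) v.2.2)

noncomputable def TB (q x y w z : ℂ) : (ℤ × ℤ) × (ℤ × ℤ) → ℂ := fun v =>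
  Sterm q (x * z) v.1.1 * Sterm q (x / z) v.1.2 * (Sterm q (y * w) v.2.1 * Sterm q (y / w) v.2.2)

noncomputable def TC (q x y w z : ℂ) : (ℤ × ℤ) × (ℤ × ℤ) → ℂ := fun v =>
  Sterm q (x * y) v.1.1 * Sterm q (x / y) v.1.2 * (Sterm q (w * z) v.2.1 * Sterm q (w / z) v.2.2)

noncomputable def fA (q x y w z : ℂ) : (ℤ × ℤ) × (ℤ × ℤ) → ℂ := fun u =>
  if 2 ∣ (u.1.1 - u.1.2) ∧ 2 ∣ (u.2.1 - u.2.2) then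
    Sterm q (x * w) ((u.1.1 + u.1.2) / 2) * Sterm q (x / w) ((u.1.1 - u.1.2) / 2)
      * (Sterm q (y * z) ((u.2.1 + u.2.2) / 2) * Sterm q (y / z) ((u.2.1 - u.2.2) / 2))
  else 0

noncomputable def fB (q x y w z : ℂ) : (ℤ × ℤ) × (ℤ × ℤ) → ℂ := fun u =>
  if 2 ∣ (u.1.1 - u.2.2) ∧ 2 ∣ (u.2.1 - u.1.2) then
    Sterm q (x * z) ((u.1.1 + u.2.2) / 2) * Sterm q (x / z) ((u.1.1 - u.2.2) / 2)
      * (Sterm q (y * w) ((u.2.1 + u.1.2) / 2) * Sterm q (y / w) ((u.2.1 - u.1.2) / 2))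
  else 0

noncomputable def fC (q x y w z : ℂ) : (ℤ × ℤ) × (ℤ × ℤ) → ℂ := fun u =>
  if 2 ∣ (u.1.1 - u.2.1 + 1) ∧ 2 ∣ (u.1.2 - u.2.2 + 1) then
    Sterm q (x * y) ((u.1.1 + u.2.1 - 1) / 2) * Sterm q (x / y) ((u.1.1 - u.2.1 + 1) / 2)
      * (Sterm q (w * z) ((u.1.2 + u.2.2 + 1) / 2) * Sterm q (w / z) ((u.1.2 - u.2.2 + 1) / 2))
  else 0

def gA : (ℤ × ℤ) × (ℤ × ℤ) → (ℤ × ℤ) × (ℤ × ℤ) := fun v =>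
  ((v.1.1 + v.1.2, v.1.1 - v.1.2), (v.2.1 + v.2.2, v.2.1 - v.2.2))

def gB : (ℤ × ℤ) × (ℤ × ℤ) → (ℤ × ℤ) × (ℤ × ℤ) := fun v =>
  ((v.1.1 + v.1.2, v.2.1 - v.2.2), (v.2.1 + v.2.2, v.1.1 - v.1.2))

def gC : (ℤ × ℤ) × (ℤ × ℤ) → (ℤ × ℤ) × (ℤ × ℤ) := fun v =>
  ((v.1.1 + v.1.2, v.2.1 + v.2.2 - 1), (v.1.1 - v.1.2 + 1, v.2.1 - v.2.2))

lemma gA_inj : Function.Injective gA := by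
  rintro ⟨⟨a, b⟩, ⟨c, d⟩⟩ ⟨⟨a', b'⟩, ⟨c', d'⟩⟩ h
  simp only [gA, Prod.mk.injEq] at h ⊢
  omega

lemma gB_inj : Function.Injective gB := by
  rintro ⟨⟨a, b⟩, ⟨c, d⟩⟩ ⟨⟨a', b'⟩, ⟨c', d'⟩⟩ h
  simp only [gB, Prod.mk.injEq] at h ⊢
  omega

lemma gC_inj : Function.Injective gC := by
  rintro ⟨⟨a, b⟩, ⟨c, d⟩⟩ ⟨⟨a', b'⟩, ⟨c', d'⟩⟩ h
  simp only [gC, Prod.mk.injEq] at h ⊢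
  omega

lemma fA_comp (v : (ℤ × ℤ) × (ℤ × ℤ)) : fA q x y w z (gA v) = TA q x y w z v := by
  obtain ⟨⟨a, b⟩, ⟨c, d⟩⟩ := v
  simp only [fA, gA, TA]
  refine (if_pos (by constructor <;> omega : 2 ∣ (a + b - (a - b)) ∧ 2 ∣ (c + d - (c - d)))).trans ?_
  rw [show (a + b + (a - b)) / 2 = a from by omega, show (a + b - (a - b)) / 2 = b from by omega,
    show (c + d + (c - d)) / 2 = c from by omega, show (c + d - (c - d)) / 2 = d from by omega]

lemma fB_comp (v : (ℤ × ℤ) × (ℤ × ℤ)) : fB q x y w z (gB v) = TB q x y w z v := by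
  obtain ⟨⟨a, b⟩, ⟨c, d⟩⟩ := v
  simp only [fB, gB, TB]
  refine (if_pos (by constructor <;> omega : 2 ∣ (a + b - (a - b)) ∧ 2 ∣ (c + d - (c - d)))).trans ?_
  rw [show (a + b + (a - b)) / 2 = a from by omega, show (a + b - (a - b)) / 2 = b from by omega,
    show (c + d + (c - d)) / 2 = c from by omega, show (c + d - (c - d)) / 2 = d from by omega]

lemma fC_comp (v : (ℤ × ℤ) × (ℤ × ℤ)) : fC q x y w z (gC v) = TC q x y w z v := by
  obtain ⟨⟨a, b⟩, ⟨c, d⟩⟩ := v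
  simp only [fC, gC, TC]
  refine (if_pos (by constructor <;> omega :
    2 ∣ (a + b - (a - b + 1) + 1) ∧ 2 ∣ (c + d - 1 - (c - d) + 1))).trans ?_
  rw [show (a + b + (a - b + 1) - 1) / 2 = a from by omega,
    show (a + b - (a - b + 1) + 1) / 2 = b from by omega,
    show (c + d - 1 + (c - d) + 1) / 2 = c from by omega,
    show (c + d - 1 - (c - d) + 1) / 2 = d from by omega]

lemma fA_supp : ∀ u ∉ Set.range gA, fA q x y w z u = 0 := by
  rintro ⟨⟨X, W⟩, ⟨Y, Z⟩⟩ hu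
  simp only [fA]
  rw [if_neg]
  rintro ⟨h1, h2⟩
  exact hu ⟨(((X + W) / 2, (X - W) / 2), ((Y + Z) / 2, (Y - Z) / 2)), by
    simp only [gA, Prod.mk.injEq]
    refine ⟨⟨?_, ?_⟩, ?_, ?_⟩ <;> omega⟩

lemma fB_supp : ∀ u ∉ Set.range gB, fB q x y w z u = 0 := by
  rintro ⟨⟨X, W⟩, ⟨Y, Z⟩⟩ hu
  simp only [fB]
  rw [if_neg]
  rintro ⟨h1, h2⟩
  exact hu ⟨(((X + Z) / 2, (X - Z) / 2), ((Y + W) / 2, (Y - W) / 2)), by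
    simp only [gB, Prod.mk.injEq]
    refine ⟨⟨?_, ?_⟩, ?_, ?_⟩ <;> omega⟩

lemma fC_supp : ∀ u ∉ Set.range gC, fC q x y w z u = 0 := by
  rintro ⟨⟨X, W⟩, ⟨Y, Z⟩⟩ hu
  simp only [fC]
  rw [if_neg]
  rintro ⟨h1, h2⟩
  exact hu ⟨(((X + Y - 1) / 2, (X - Y + 1) / 2), ((W + Z + 1) / 2, (W - Z + 1) / 2)), by
    simp only [gC, Prod.mk.injEq]
    refine ⟨⟨?_, ?_⟩, ?_, ?_⟩ <;> omega⟩

/-- The termwise identity. -/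
lemma termwise (hq0 : q ≠ 0) (hx : x ≠ 0) (hy : y ≠ 0) (hw : w ≠ 0) (hz : z ≠ 0)
    (u : (ℤ × ℤ) × (ℤ × ℤ)) :
    fA q x y w z u - fB q x y w z u = y / w * fC q x y w z u := by
  obtain ⟨⟨X, W⟩, ⟨Y, Z⟩⟩ := u
  simp only [fA, fB, fC]
  by_cases hA : 2 ∣ (X - W) ∧ 2 ∣ (Y - Z) <;> by_cases hB : 2 ∣ (X - Z) ∧ 2 ∣ (Y - W)
  · -- both: A cancels B, C dead
    rw [if_pos hA, if_pos hB, if_neg (by omega : ¬(2 ∣ (X - Y + 1) ∧ 2 ∣ (W - Z + 1))),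
      mul_zero, sub_eq_zero]
    rw [show (Y - Z) / 2 = (X + W) / 2 + (X - W) / 2 + (Y + Z) / 2 - 2 * ((X + Z) / 2) from by
        omega,
      show (X + Z) / 2 = (X + Z) / 2 from rfl,
      show (X - Z) / 2 = (X + W) / 2 + (X - W) / 2 - (X + Z) / 2 from by omega,
      show (Y + W) / 2 = (X + W) / 2 + (Y + Z) / 2 - (X + Z) / 2 from by omega,
      show (Y - W) / 2 = (X - W) / 2 + (Y + Z) / 2 - (X + Z) / 2 from by omega]
    exact caseAB hq0 hx hy hw hz _ _ _ _
  · -- A live, C live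
    rw [if_pos hA, if_neg hB, if_pos (by omega : 2 ∣ (X - Y + 1) ∧ 2 ∣ (W - Z + 1)), sub_zero]
    rw [show (Y - Z) / 2
          = 2 * ((X + Y - 1) / 2) + 1 - (X + W) / 2 - (X - W) / 2 - (Y + Z) / 2 from by omega,
      show (X - Y + 1) / 2 = (X + W) / 2 + (X - W) / 2 - (X + Y - 1) / 2 from by omega,
      show (W + Z + 1) / 2 = (X + W) / 2 + (Y + Z) / 2 - (X + Y - 1) / 2 from by omega,
      show (W - Z + 1) / 2 = (X + Y - 1) / 2 + 1 - (X - W) / 2 - (Y + Z) / 2 from by omega]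
    exact caseAC hq0 hx hy hw hz _ _ _ _
  · -- B live, C live
    rw [if_neg hA, if_pos hB, if_pos (by omega : 2 ∣ (X - Y + 1) ∧ 2 ∣ (W - Z + 1)), zero_sub]
    rw [show (Y - W) / 2
          = 2 * ((X + Y - 1) / 2) + 1 - (X + Z) / 2 - (X - Z) / 2 - (Y + W) / 2 from by omega,
      show (X - Y + 1) / 2 = (X + Z) / 2 + (X - Z) / 2 - (X + Y - 1) / 2 from by omega,
      show (W + Z + 1) / 2 = (X + Z) / 2 + (Y + W) / 2 - (X + Y - 1) / 2 from by omega,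
      show (W - Z + 1) / 2 = (X - Z) / 2 + (Y + W) / 2 - (X + Y - 1) / 2 from by omega]
    rw [caseBC hq0 hx hy hw hz _ _ _ _, neg_neg]
  · -- all dead
    rw [if_neg hA, if_neg hB, if_neg (by omega : ¬(2 ∣ (X - Y + 1) ∧ 2 ∣ (W - Z + 1)))]
    simp

end riemann

section final
variable {q x y w z : ℂ}

lemma summable_norm_Sterm (hq0 : q ≠ 0) (hq : ‖q‖ < 1) {u : ℂ} (hu : u ≠ 0) :
    Summable fun j : ℤ => ‖Sterm q u j‖ := by
  have h := summable_int_eZ (norm_pos_iff.mpr hq0) hq (norm_pos_iff.mpr hu)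
  exact h.congr fun j => (norm_Sterm q u j).symm

lemma summable_norm_pair (hq0 : q ≠ 0) (hq : ‖q‖ < 1) {u v : ℂ}
    (hu : u ≠ 0) (hv : v ≠ 0) :
    Summable fun p : ℤ × ℤ => ‖Sterm q u p.1 * Sterm q v p.2‖ :=
  (((summable_norm_Sterm hq0 hq hu).mul_of_nonneg (summable_norm_Sterm hq0 hq hv)
    (fun _ => norm_nonneg _) (fun _ => norm_nonneg _)).congr
      fun p => (norm_mul _ _).symm)

lemma summable_norm_quad (hq0 : q ≠ 0) (hq : ‖q‖ < 1) {u1 v1 u2 v2 : ℂ}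
    (h1 : u1 ≠ 0) (h2 : v1 ≠ 0) (h3 : u2 ≠ 0) (h4 : v2 ≠ 0) :
    Summable fun p : (ℤ × ℤ) × (ℤ × ℤ) =>
      ‖Sterm q u1 p.1.1 * Sterm q v1 p.1.2 * (Sterm q u2 p.2.1 * Sterm q v2 p.2.2)‖ :=
  (((summable_norm_pair hq0 hq h1 h2).mul_of_nonneg (summable_norm_pair hq0 hq h3 h4)
    (fun _ => norm_nonneg _) (fun _ => norm_nonneg _)).congr
      fun p => (norm_mul _ _).symm)

lemma SZ_quad (hq0 : q ≠ 0) (hq : ‖q‖ < 1) {u1 v1 u2 v2 : ℂ}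
    (h1 : u1 ≠ 0) (h2 : v1 ≠ 0) (h3 : u2 ≠ 0) (h4 : v2 ≠ 0) :
    SZ q u1 * SZ q v1 * (SZ q u2 * SZ q v2)
      = ∑' p : (ℤ × ℤ) × (ℤ × ℤ),
          Sterm q u1 p.1.1 * Sterm q v1 p.1.2 * (Sterm q u2 p.2.1 * Sterm q v2 p.2.2) := by
  rw [SZ, SZ, SZ, SZ,
    tsum_mul_tsum_of_summable_norm (summable_norm_Sterm hq0 hq h1) (summable_norm_Sterm hq0 hq h2),
    tsum_mul_tsum_of_summable_norm (summable_norm_Sterm hq0 hq h3) (summable_norm_Sterm hq0 hq h4),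
    tsum_mul_tsum_of_summable_norm (summable_norm_pair hq0 hq h1 h2)
      (summable_norm_pair hq0 hq h3 h4)]

/-- The Riemann relation for theta series. -/
lemma riemannId (hq0 : q ≠ 0) (hq : ‖q‖ < 1)
    (hx : x ≠ 0) (hy : y ≠ 0) (hw : w ≠ 0) (hz : z ≠ 0) :
    SZ q (x * w) * SZ q (x / w) * (SZ q (y * z) * SZ q (y / z))
      - SZ q (x * z) * SZ q (x / z) * (SZ q (y * w) * SZ q (y / w))
      = y / w * (SZ q (x * y) * SZ q (x / y) * (SZ q (w * z) * SZ q (w / z))) := by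
  have hxw := mul_ne_zero hx hw
  have hxdw := div_ne_zero hx hw
  have hyz := mul_ne_zero hy hz
  have hydz := div_ne_zero hy hz
  have hxz := mul_ne_zero hx hz
  have hxdz := div_ne_zero hx hz
  have hyw := mul_ne_zero hy hw
  have hydw := div_ne_zero hy hw
  have hxy := mul_ne_zero hx hy
  have hxdy := div_ne_zero hx hy
  have hwz := mul_ne_zero hw hz
  have hwdz := div_ne_zero hw hz
  rw [SZ_quad hq0 hq hxw hxdw hyz hydz, SZ_quad hq0 hq hxz hxdz hyw hydw,
    SZ_quad hq0 hq hxy hxdy hwz hwdz]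
  have hsTA : Summable (TA q x y w z) :=
    Summable.of_norm (summable_norm_quad hq0 hq hxw hxdw hyz hydz)
  have hsTB : Summable (TB q x y w z) :=
    Summable.of_norm (summable_norm_quad hq0 hq hxz hxdz hyw hydw)
  have hsTC : Summable (TC q x y w z) :=
    Summable.of_norm (summable_norm_quad hq0 hq hxy hxdy hwz hwdz)
  have hsfA : Summable (fA q x y w z) :=
    (gA_inj.summable_iff fA_supp).1 (hsTA.congr fun v => (fA_comp v).symm)
  have hsfB : Summable (fB q x y w z) :=
    (gB_inj.summable_iff fB_supp).1 (hsTB.congr fun v => (fB_comp v).symm)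
  have eA : ∑' v, TA q x y w z v = ∑' u, fA q x y w z u := by
    rw [← gA_inj.tsum_eq (f := fA q x y w z) (Function.support_subset_iff'.mpr fA_supp)]
    exact tsum_congr fun v => (fA_comp v).symm
  have eB : ∑' v, TB q x y w z v = ∑' u, fB q x y w z u := by
    rw [← gB_inj.tsum_eq (f := fB q x y w z) (Function.support_subset_iff'.mpr fB_supp)]
    exact tsum_congr fun v => (fB_comp v).symm
  have eC : ∑' v, TC q x y w z v = ∑' u, fC q x y w z u := by
    rw [← gC_inj.tsum_eq (f := fC q x y w z) (Function.support_subset_iff'.mpr fC_supp)]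
    exact tsum_congr fun v => (fC_comp v).symm
  calc ∑' v, TA q x y w z v - ∑' v, TB q x y w z v
      = ∑' u, fA q x y w z u - ∑' u, fB q x y w z u := by rw [eA, eB]
    _ = ∑' u, (fA q x y w z u - fB q x y w z u) := (Summable.tsum_sub hsfA hsfB).symm
    _ = ∑' u, y / w * fC q x y w z u := tsum_congr (termwise hq0 hx hy hw hz)
    _ = y / w * ∑' u, fC q x y w z u := tsum_mul_left
    _ = y / w * ∑' v, TC q x y w z v := by rw [eC]

end final
end ThetaAdd

open ThetaAdd in
/-- The fundamental addition formula for theta functions: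
`θ(xw)θ(x/w)θ(yz)θ(y/z) − θ(xz)θ(x/z)θ(yw)θ(y/w) = (y/w)·θ(xy)θ(x/y)θ(wz)θ(w/z)`. -/
theorem theta_addition_formula (p : ℂ) (hp : ‖p‖ < 1)
    (x y w z : ℂ) (hx : x ≠ 0) (hy : y ≠ 0) (hw : w ≠ 0) (hz : z ≠ 0) :
    theta (x * w) p * theta (x / w) p * theta (y * z) p * theta (y / z) p
      - theta (x * z) p * theta (x / z) p * theta (y * w) p * theta (y / w) p
      = y / w * (theta (x * y) p * theta (x / y) p * theta (w * z) p * theta (w / z) p) := by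
  rcases eq_or_ne p 0 with rfl | hp0
  · simp only [theta_zero]
    field_simp
    ring
  · have hP : qPochInf p p ≠ 0 := P_ne_zero hp
    apply mul_right_cancel₀ (pow_ne_zero 4 hP)
    have J : ∀ u : ℂ, u ≠ 0 → theta u p * qPochInf p p = SZ p u := fun u hu => JTP hp0 hp hu
    have e1 := J (x * w) (mul_ne_zero hx hw)
    have e2 := J (x / w) (div_ne_zero hx hw)
    have e3 := J (y * z) (mul_ne_zero hy hz)
    have e4 := J (y / z) (div_ne_zero hy hz)
    have e5 := J (x * z) (mul_ne_zero hx hz)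
    have e6 := J (x / z) (div_ne_zero hx hz)
    have e7 := J (y * w) (mul_ne_zero hy hw)
    have e8 := J (y / w) (div_ne_zero hy hw)
    have e9 := J (x * y) (mul_ne_zero hx hy)
    have e10 := J (x / y) (div_ne_zero hx hy)
    have e11 := J (w * z) (mul_ne_zero hw hz)
    have e12 := J (w / z) (div_ne_zero hw hz)
    calc (theta (x * w) p * theta (x / w) p * theta (y * z) p * theta (y / z) p
          - theta (x * z) p * theta (x / z) p * theta (y * w) p * theta (y / w) p)
            * qPochInf p p ^ 4
        = (theta (x * w) p * qPochInf p p) * (theta (x / w) p * qPochInf p p)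
            * ((theta (y * z) p * qPochInf p p) * (theta (y / z) p * qPochInf p p))
          - (theta (x * z) p * qPochInf p p) * (theta (x / z) p * qPochInf p p)
            * ((theta (y * w) p * qPochInf p p) * (theta (y / w) p * qPochInf p p)) := by ring
      _ = SZ p (x * w) * SZ p (x / w) * (SZ p (y * z) * SZ p (y / z))
          - SZ p (x * z) * SZ p (x / z) * (SZ p (y * w) * SZ p (y / w)) := by
            rw [e1, e2, e3, e4, e5, e6, e7, e8]
      _ = y / w * (SZ p (x * y) * SZ p (x / y) * (SZ p (w * z) * SZ p (w / z))) :=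
            riemannId hp0 hp hx hy hw hz
      _ = y / w * ((theta (x * y) p * qPochInf p p) * (theta (x / y) p * qPochInf p p)
            * ((theta (w * z) p * qPochInf p p) * (theta (w / z) p * qPochInf p p))) := by
            rw [e9, e10, e11, e12]
      _ = y / w * (theta (x * y) p * theta (x / y) p * theta (w * z) p * theta (w / z) p)
            * qPochInf p p ^ 4 := by ring
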